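/- Let n ≥ 2 and let ξ₀ be the unique real number with det M₁(ξ₀) = 0, where M₁(ξ) is the n×n symmetric matrix with (1,1) entry ξ and all other entries 1/((i + j − 1)(i + j)). Let M₂(z) be the n×n symmetric matrix with (1,1) entry z and all other entries 1/(i + j − 1). Then for every z > (1 + 1/n)ξ₀ + 1/2 − 1/(2n), the matrix M₂(z) is positive definite. -/

import Mathlib

open Matrix

section Aux13
open Finset Polynomial Nat


lemma aux_prod_shift (m a : ℕ) : ∏ j ∈ range m, ((j + a + 1 : ℕ) : ℝ) = (m+a)! / (a)! := by
  induction m with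
  | zero => simp [div_self (by exact_mod_cast (Nat.factorial_ne_zero a) : ((a)! : ℝ) ≠ 0)]
  | succ m ih =>
    rw [Finset.prod_range_succ, ih, div_mul_eq_mul_div]
    congr 1
    push_cast [Nat.factorial_succ, show m + 1 + a = m + a + 1 by ring]
    ring

lemma aux_prod_add_one (s : ℕ) : ∏ j ∈ range s, ((j : ℝ) + 1) = (s)! := by
  have h := aux_prod_shift s 0
  norm_num at h
  rw [← h]

lemma aux_prod_erase (m i : ℕ) (hi : i < m + 1) :
    ∏ t ∈ (range (m+1)).erase i, ((t:ℝ) - (i:ℝ)) = (-1)^i * (i)! * (m - i)! := by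
  have hsplit : (range (m+1)).erase i = range i ∪ Ico (i+1) (m+1) := by
    ext t
    simp only [Finset.mem_erase, Finset.mem_range, Finset.mem_union, Finset.mem_Ico]
    omega
  have hdisj : Disjoint (range i) (Ico (i+1) (m+1)) := by
    simp only [Finset.disjoint_left, Finset.mem_range, Finset.mem_Ico]
    omega
  rw [hsplit, Finset.prod_union hdisj]
  have h1 : ∏ t ∈ range i, ((t:ℝ) - (i:ℝ)) = (-1)^i * (i)! := by
    rw [← Finset.prod_range_reflect]
    have heq : ∀ j ∈ range i, (((i - 1 - j : ℕ)) : ℝ) - (i:ℝ) = (-1) * ((j:ℝ) + 1) := by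
      intro j hj
      simp only [Finset.mem_range] at hj
      have h2 : ((i - 1 - j : ℕ) : ℝ) = (i : ℝ) - 1 - j := by
        have h3 : (i - 1 - j : ℕ) = i - (1 + j) := by omega
        rw [h3, Nat.cast_sub (by omega : 1 + j ≤ i)]
        push_cast; ring
      rw [h2]; ring
    rw [Finset.prod_congr rfl heq, Finset.prod_mul_distrib, Finset.prod_const,
      Finset.card_range, aux_prod_add_one]
  have h2 : ∏ t ∈ Ico (i+1) (m+1), ((t:ℝ) - (i:ℝ)) = (m - i)! := by
    rw [Finset.prod_Ico_eq_prod_range]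
    have heq : ∀ j ∈ range (m + 1 - (i + 1)), ((i + 1 + j : ℕ) : ℝ) - (i:ℝ) = (j:ℝ) + 1 := by
      intro j _; push_cast; ring
    rw [show (m + 1 - (i + 1)) = m - i by omega] at *
    rw [Finset.prod_congr rfl (fun j _ => by push_cast; ring :
      ∀ j ∈ range (m - i), ((i + 1 + j : ℕ) : ℝ) - (i:ℝ) = (j:ℝ) + 1), aux_prod_add_one]
  rw [h1, h2]

lemma aux_interp (m : ℕ) (N : Polynomial ℝ) (hN : N.natDegree ≤ m) :
    ∑ i ∈ range (m+1), C ((-1)^i * N.eval (-(i:ℝ)) / ((i)! * (m - i)!)) *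
      ∏ t ∈ (range (m+1)).erase i, (X + C (t:ℝ)) = N := by
  set P := (∑ i ∈ range (m+1), C ((-1)^i * N.eval (-(i:ℝ)) / ((i)! * (m - i)!)) *
      ∏ t ∈ (range (m+1)).erase i, (X + C (t:ℝ))) - N with hP
  have hz : P = 0 := by
    apply Polynomial.eq_zero_of_natDegree_lt_card_of_eval_eq_zero P
      (f := fun i : Fin (m+1) => -(i:ℝ))
    · intro a b hab
      have : ((a:ℕ):ℝ) = ((b:ℕ):ℝ) := by linarith [neg_inj.mp hab]
      exact Fin.ext (Nat.cast_injective this)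
    · intro i
      rw [hP, eval_sub, eval_finset_sum]
      have hsingle : ∀ i' ∈ range (m+1), i' ≠ (i:ℕ) →
          eval (-(i:ℝ)) (C ((-1)^i' * N.eval (-(i':ℝ)) / ((i')! * (m - i')!)) *
            ∏ t ∈ (range (m+1)).erase i', (X + C (t:ℝ))) = 0 := by
        intro i' _ hne
        rw [eval_mul, eval_prod]
        have hmem : (i:ℕ) ∈ (range (m+1)).erase i' :=
          Finset.mem_erase.mpr ⟨fun h => hne h.symm, Finset.mem_range.mpr i.isLt⟩
        rw [Finset.prod_eq_zero hmem (by simp), mul_zero]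
      rw [Finset.sum_eq_single_of_mem (i:ℕ) (Finset.mem_range.mpr i.isLt) hsingle]
      rw [eval_mul, eval_prod, eval_C]
      have : ∀ t ∈ (range (m+1)).erase (i:ℕ), eval (-(i:ℝ)) (X + C (t:ℝ)) = (t:ℝ) - (i:ℝ) := by
        intro t _; simp; ring
      rw [Finset.prod_congr rfl this, aux_prod_erase m i i.isLt]
      have hfac : ((i:ℕ)! : ℝ) * ((m - i)! : ℝ) ≠ 0 := by
        positivity
      have hpow : ((-1:ℝ))^(i:ℕ) * ((-1:ℝ))^(i:ℕ) = 1 := by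
        rw [← pow_add, ← two_mul, pow_mul]; norm_num
      field_simp
      ring_nf
      rw [show ((i:ℕ) * 2) = (i:ℕ) + (i:ℕ) by ring, pow_add, hpow, mul_one]
      ring
    · rw [Fintype.card_fin]
      have h1 : (∑ i ∈ range (m+1), C ((-1)^i * N.eval (-(i:ℝ)) / ((i)! * (m - i)!)) *
          ∏ t ∈ (range (m+1)).erase i, (X + C (t:ℝ))).natDegree ≤ m := by
        apply Polynomial.natDegree_sum_le_of_forall_le
        intro i _
        calc (C ((-1)^i * N.eval (-(i:ℝ)) / ((i)! * (m - i)!)) *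
            ∏ t ∈ (range (m+1)).erase i, (X + C (t:ℝ))).natDegree
            ≤ _ + _ := Polynomial.natDegree_mul_le
          _ ≤ 0 + m := by
              gcongr
              · exact le_of_eq (natDegree_C _)
              · calc (∏ t ∈ (range (m+1)).erase i, (X + C (t:ℝ))).natDegree
                    ≤ ∑ t ∈ (range (m+1)).erase i, (X + C (t:ℝ)).natDegree :=
                      Polynomial.natDegree_prod_le _ _
                  _ ≤ m := by
                      simp only [natDegree_X_add_C]
                      rw [Finset.sum_const, smul_eq_mul, mul_one]
                      exact le_of_eq (by rw [Finset.card_erase_of_mem ‹i ∈ range (m+1)›,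
                                             Finset.card_range]; simp)
          _ = m := zero_add m
      calc P.natDegree ≤ max _ N.natDegree := Polynomial.natDegree_sub_le _ _
        _ < m + 1 := by omega
  exact sub_eq_zero.mp hz

lemma aux_pf (m : ℕ) (N : Polynomial ℝ) (hN : N.natDegree ≤ m) (x : ℝ) (hx : 0 < x) :
    ∑ i ∈ range (m+1), ((-1)^i * N.eval (-(i:ℝ)) / ((i)! * (m - i)!)) / (x + i)
      = N.eval x / ∏ t ∈ range (m+1), (x + (t:ℝ)) := by
  have hI := congrArg (eval x) (aux_interp m N hN)
  simp only [eval_finset_sum, eval_mul, eval_C, eval_prod, eval_add, eval_X] at hI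
  have hD : ∀ t : ℕ, x + (t:ℝ) ≠ 0 := fun t => by positivity
  have hDne : ∏ t ∈ range (m+1), (x + (t:ℝ)) ≠ 0 :=
    Finset.prod_ne_zero_iff.mpr fun t _ => hD t
  rw [eq_div_iff hDne, Finset.sum_mul, ← hI]
  apply Finset.sum_congr rfl
  intro i hi
  rw [← Finset.mul_prod_erase _ _ hi]
  field_simp

lemma aux_sum_zero (m : ℕ) (N : Polynomial ℝ) (hN : N.natDegree < m) :
    ∑ i ∈ range (m+1), (-1)^i * N.eval (-(i:ℝ)) / ((i)! * (m - i)!) = 0 := by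
  have hI := congrArg (fun p => coeff p m) (aux_interp m N hN.le)
  simp only [Polynomial.finset_sum_coeff, Polynomial.coeff_C_mul] at hI
  have hQ : ∀ i ∈ range (m+1), (∏ t ∈ (range (m+1)).erase i, (X + C (t:ℝ))).coeff m = 1 := by
    intro i hi
    have hmon : (∏ t ∈ (range (m+1)).erase i, (X + C (t:ℝ))).Monic :=
      monic_prod_of_monic _ _ fun t _ => monic_X_add_C _
    have hdeg : (∏ t ∈ (range (m+1)).erase i, (X + C (t:ℝ))).natDegree = m := by
      rw [Polynomial.natDegree_prod_of_monic _ _ fun t _ => monic_X_add_C _]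
      simp only [natDegree_X_add_C]
      rw [Finset.sum_const, smul_eq_mul, mul_one, Finset.card_erase_of_mem hi,
        Finset.card_range]
      simp
    have := hmon.coeff_natDegree
    rwa [hdeg] at this
  rw [Finset.sum_congr rfl fun i hi => by rw [hQ i hi]] at hI
  simp only [mul_one] at hI
  rw [Polynomial.coeff_eq_zero_of_natDegree_lt hN] at hI
  exact hI

noncomputable def Npoly (n : ℕ) (c : ℝ) : Polynomial ℝ := C c * ∏ t ∈ Icc 2 n, (C (t:ℝ) - X)

lemma Npoly_natDegree (n : ℕ) (c : ℝ) : (Npoly n c).natDegree ≤ n - 1 := by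
  unfold Npoly
  calc (C c * ∏ t ∈ Icc 2 n, (C (t:ℝ) - X)).natDegree
      ≤ _ + _ := Polynomial.natDegree_mul_le
    _ ≤ 0 + (n - 1) := by
        gcongr
        · exact le_of_eq (natDegree_C _)
        · calc (∏ t ∈ Icc 2 n, (C (t:ℝ) - X)).natDegree
              ≤ ∑ t ∈ Icc 2 n, (C (t:ℝ) - X).natDegree := Polynomial.natDegree_prod_le _ _
            _ ≤ n - 1 := by
                have h1 : ∀ t : ℕ, (C (t:ℝ) - X).natDegree = 1 := by
                  intro t
                  rw [show C (t:ℝ) - X = -(X - C (t:ℝ)) by ring, natDegree_neg, natDegree_X_sub_C]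
                simp only [h1, Finset.sum_const, smul_eq_mul, mul_one, Nat.card_Icc]
                omega
    _ = n - 1 := zero_add _

lemma Npoly_eval (n : ℕ) (c : ℝ) (y : ℝ) :
    (Npoly n c).eval y = c * ∏ t ∈ Icc 2 n, ((t:ℝ) - y) := by
  unfold Npoly
  rw [eval_mul, eval_C, eval_prod]
  simp

lemma Npoly_eval_mid (n : ℕ) (c : ℝ) (r : ℕ) (hr1 : 1 ≤ r) (hrn : r ≤ n - 1) :
    (Npoly n c).eval ((r:ℝ) + 1) = 0 := by
  rw [Npoly_eval]
  have hmem : r + 1 ∈ Icc 2 n := Finset.mem_Icc.mpr ⟨by omega, by omega⟩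
  rw [Finset.prod_eq_zero hmem (by push_cast; ring), mul_zero]

lemma Npoly_eval_one (n : ℕ) (c : ℝ) (hn : 1 ≤ n) :
    (Npoly n c).eval 1 = c * (n - 1)! := by
  rw [Npoly_eval]
  congr 1
  rw [show Icc 2 n = Ico 2 (n+1) by rw [Finset.Ico_add_one_right_eq_Icc], Finset.prod_Ico_eq_prod_range]
  rw [show n + 1 - 2 = n - 1 by omega]
  rw [← aux_prod_add_one (n-1)]
  exact Finset.prod_congr rfl fun j _ => by push_cast; ring

lemma Npoly_eval_zero (n : ℕ) (c : ℝ) (hn : 1 ≤ n) :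
    (Npoly n c).eval 0 = c * (n)! := by
  rw [Npoly_eval]
  congr 1
  rw [show Icc 2 n = Ico 2 (n+1) by rw [Finset.Ico_add_one_right_eq_Icc], Finset.prod_Ico_eq_prod_range]
  rw [show n + 1 - 2 = n - 1 by omega]
  have := aux_prod_shift (n-1) 1
  rw [show n - 1 + 1 = n by omega] at this
  calc ∏ k ∈ range (n-1), (((2 + k : ℕ):ℝ) - 0)
      = ∏ k ∈ range (n-1), ((k + 1 + 1 : ℕ) : ℝ) := by
        exact Finset.prod_congr rfl fun j _ => by push_cast; ring
    _ = (n)! := by rw [this]; norm_num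

lemma fac_pred (n : ℕ) (h : 1 ≤ n) : (n)! = n * (n-1)! := by
  conv_lhs => rw [show n = n - 1 + 1 by omega]
  rw [Nat.factorial_succ, show n - 1 + 1 = n by omega]

noncomputable def kvec (n : ℕ) : ℕ → ℝ :=
  fun i => (-1)^i * (Npoly n (n:ℝ)).eval (-(i:ℝ)) / ((i)! * (n - 1 - i)!)

lemma kvec_zero (n : ℕ) (hn : 1 ≤ n) : kvec n 0 = (n:ℝ)^2 := by
  unfold kvec
  norm_num [Npoly_eval_zero n _ hn]
  rw [fac_pred n hn]
  have : ((n-1)! : ℝ) ≠ 0 := by positivity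
  push_cast
  field_simp

lemma rowA (n : ℕ) (hn : 2 ≤ n) (r : ℕ) (hr : r < n) :
    ∑ i ∈ range n, kvec n i / ((r:ℝ) + i + 1) = if r = 0 then 1 else 0 := by
  have hm : n - 1 + 1 = n := by omega
  have hpf := aux_pf (n-1) (Npoly n (n:ℝ)) (Npoly_natDegree n _) ((r:ℝ)+1) (by positivity)
  rw [hm] at hpf
  have hL : ∑ i ∈ range n, kvec n i / ((r:ℝ) + i + 1)
      = ∑ i ∈ range n, ((-1)^i * (Npoly n (n:ℝ)).eval (-(i:ℝ)) / ((i)! * (n - 1 - i)!)) / (((r:ℝ)+1) + i) := by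
    exact Finset.sum_congr rfl fun i _ => by unfold kvec; ring_nf
  rw [hL, hpf]
  rcases Nat.eq_zero_or_pos r with h0 | h1
  · subst h0
    norm_num
    rw [Npoly_eval_one n _ (by omega)]
    have hden : ∏ t ∈ range n, ((1:ℝ) + t) = (n)! := by
      rw [← aux_prod_add_one n]
      exact Finset.prod_congr rfl fun t _ => by ring
    rw [hden, fac_pred n (by omega)]
    have h1 : ((n-1)! : ℝ) ≠ 0 := by positivity
    have h2 : (n : ℝ) ≠ 0 := by positivity
    push_cast
    field_simp
  · rw [Npoly_eval_mid n _ r h1 (by omega), if_neg (by omega), zero_div]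

noncomputable def dvec (n : ℕ) : ℕ → ℝ :=
  fun i => (-1)^i * (Npoly n ((n:ℝ)*(n+1)/2)).eval (-(i:ℝ)) / ((i)! * (n - i)!)

noncomputable def wvec (n : ℕ) : ℕ → ℝ := fun i => ∑ j ∈ range (i+1), dvec n j

lemma wvec_zero (n : ℕ) (hn : 1 ≤ n) : wvec n 0 = (n:ℝ)*(n+1)/2 := by
  unfold wvec dvec
  norm_num [Npoly_eval_zero n _ hn]
  have : ((n)! : ℝ) ≠ 0 := by positivity
  field_simp

lemma dvec_total (n : ℕ) (hn : 2 ≤ n) : ∑ i ∈ range (n+1), dvec n i = 0 := by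
  unfold dvec
  exact aux_sum_zero n _ (lt_of_le_of_lt (Npoly_natDegree n _) (by omega))

lemma rowB (n : ℕ) (hn : 2 ≤ n) (r : ℕ) (hr : r < n) :
    ∑ i ∈ range n, wvec n i / ((((r:ℝ) + i + 1)) * ((r:ℝ) + i + 2))
      = if r = 0 then 1/2 else 0 := by
  set x : ℝ := (r:ℝ) + 1 with hx
  have hxpos : 0 < x := by positivity
  have hne : ∀ i : ℕ, x + (i:ℝ) ≠ 0 := fun i => by positivity
  -- summation by parts
  have hparts := Finset.sum_range_by_parts (fun i : ℕ => 1/(x+i)) (dvec n) (n+1)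
  simp only [smul_eq_mul, Nat.add_sub_cancel] at hparts
  rw [show ∑ i ∈ range (n+1), dvec n i = 0 from dvec_total n hn, mul_zero, zero_sub] at hparts
  -- identify wvec
  have hW : ∀ i : ℕ, ∑ j ∈ range (i+1), dvec n j = wvec n i := fun i => rfl
  -- LHS of goal equals the by-parts sum
  have hL : ∑ i ∈ range n, wvec n i / (((r:ℝ) + i + 1) * ((r:ℝ) + i + 2))
      = -∑ i ∈ range n, (1/(x + (i+1:ℕ)) - 1/(x+i)) * (∑ j ∈ range (i+1), dvec n j) := by
    rw [← Finset.sum_neg_distrib]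
    apply Finset.sum_congr rfl
    intro i _
    rw [hW]
    have h1 : x + ((i:ℕ):ℝ) ≠ 0 := hne i
    have h2 : x + (((i+1):ℕ):ℝ) ≠ 0 := hne (i+1)
    have helper : ∀ a : ℝ, a ≠ 0 → a + 1 ≠ 0 → ∀ w : ℝ,
        w / (a*(a+1)) = -((1/(a+1) - 1/a) * w) := by
      intro a ha ha1 w
      field_simp
      try ring
      try tauto
    have hkey := helper ((r:ℝ)+1+i) (by positivity) (by positivity) (wvec n i)
    push_cast
    rw [hx]
    linear_combination hkey
  have hpf := aux_pf n (Npoly n ((n:ℝ)*(n+1)/2)) (le_trans (Npoly_natDegree n _) (by omega)) x hxpos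
  have hsum : ∑ i ∈ range (n+1), dvec n i / (x + i)
      = (Npoly n ((n:ℝ)*(n+1)/2)).eval x / ∏ t ∈ range (n+1), (x + (t:ℝ)) := by
    rw [← hpf]
    exact Finset.sum_congr rfl fun i _ => by unfold dvec; ring
  have hsum' : ∑ i ∈ range (n+1), (1/(x+i)) * dvec n i
      = (Npoly n ((n:ℝ)*(n+1)/2)).eval x / ∏ t ∈ range (n+1), (x + (t:ℝ)) := by
    rw [← hsum]; exact Finset.sum_congr rfl fun i _ => by ring
  rw [hL, ← hparts, hsum']
  rcases Nat.eq_zero_or_pos r with h0 | h1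
  · subst h0
    have hx1 : x = 1 := by rw [hx]; norm_num
    rw [hx1, if_pos rfl, Npoly_eval_one n _ (by omega)]
    have hden : ∏ t ∈ range (n+1), ((1:ℝ) + t) = (n+1)! := by
      rw [← aux_prod_add_one (n+1)]
      exact Finset.prod_congr rfl fun t _ => by ring
    rw [hden]
    have hfac : ((n+1):ℕ)! = (n+1) * n * (n-1)! := by
      rw [Nat.factorial_succ, fac_pred n (by omega)]; ring
    rw [hfac]
    have h1 : ((n-1)! : ℝ) ≠ 0 := by positivity
    have h2 : (n : ℝ) ≠ 0 := by positivity
    have h3 : ((n:ℝ) + 1) ≠ 0 := by positivity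
    push_cast
    field_simp
  · rw [hx, Npoly_eval_mid n _ r h1 (by omega), if_neg (by omega), zero_div]

noncomputable def Bf (n : ℕ) (u v : Fin n → ℝ) : ℝ :=
  ∑ i : Fin n, ∑ j : Fin n, u i * v j / (((i:ℕ):ℝ) + ((j:ℕ):ℝ) + 1)

lemma Bf_integral (n : ℕ) (u : Fin n → ℝ) :
    Bf n u u = ∫ x in (0:ℝ)..1, (∑ i : Fin n, u i * x^(i:ℕ))^2 := by
  have hcont : ∀ (c : ℝ) (k : ℕ), IntervalIntegrable (fun x : ℝ => c * x^k)
      MeasureTheory.volume 0 1 :=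
    fun c k => Continuous.intervalIntegrable (continuous_const.mul (continuous_pow k)) _ _
  have hsq : ∀ x : ℝ, (∑ i : Fin n, u i * x^(i:ℕ))^2
      = ∑ i : Fin n, ∑ j : Fin n, u i * u j * x^((i:ℕ)+(j:ℕ)) := by
    intro x
    rw [sq, Finset.sum_mul_sum]
    exact Finset.sum_congr rfl fun i _ => Finset.sum_congr rfl fun j _ => by
      rw [pow_add]; ring
  have h0 : (∫ x in (0:ℝ)..1, (∑ i : Fin n, u i * x^(i:ℕ))^2)
      = ∫ x in (0:ℝ)..1, ∑ i : Fin n, ∑ j : Fin n, u i * u j * x^((i:ℕ)+(j:ℕ)) := by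
    apply intervalIntegral.integral_congr
    intro x _
    exact hsq x
  have h1 : (∫ x in (0:ℝ)..1, ∑ i : Fin n, ∑ j : Fin n, u i * u j * x ^ ((i:ℕ)+(j:ℕ)))
      = ∑ i : Fin n, ∫ x in (0:ℝ)..1, ∑ j : Fin n, u i * u j * x ^ ((i:ℕ)+(j:ℕ)) :=
    intervalIntegral.integral_finset_sum (fun i _ =>
      Continuous.intervalIntegrable
        (continuous_finset_sum _ (fun j _ => continuous_const.mul (continuous_pow _))) _ _)
  have h2 : ∀ i : Fin n, (∫ x in (0:ℝ)..1, ∑ j : Fin n, u i * u j * x ^ ((i:ℕ)+(j:ℕ)))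
      = ∑ j : Fin n, ∫ x in (0:ℝ)..1, u i * u j * x ^ ((i:ℕ)+(j:ℕ)) := fun i =>
    intervalIntegral.integral_finset_sum (fun j _ => hcont _ _)
  rw [h0, h1]
  unfold Bf
  refine Finset.sum_congr rfl fun i _ => ?_
  rw [h2 i]
  refine Finset.sum_congr rfl fun j _ => ?_
  rw [intervalIntegral.integral_const_mul, integral_pow]
  push_cast
  norm_num
  try rw [div_eq_mul_inv]

lemma Bf_def (n : ℕ) (u v : Fin n → ℝ) :
    Bf n u v = ∑ i : Fin n, ∑ j : Fin n, u i * v j / (((i:ℕ):ℝ) + ((j:ℕ):ℝ) + 1) := rfl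

lemma Bf_symm (n : ℕ) (u v : Fin n → ℝ) : Bf n u v = Bf n v u := by
  unfold Bf
  rw [Finset.sum_comm]
  exact Finset.sum_congr rfl fun i _ => Finset.sum_congr rfl fun j _ => by ring_nf

lemma Bf_sub_left (n : ℕ) (u v w : Fin n → ℝ) : Bf n (u - v) w = Bf n u w - Bf n v w := by
  unfold Bf
  rw [← Finset.sum_sub_distrib]
  refine Finset.sum_congr rfl fun i _ => ?_
  rw [← Finset.sum_sub_distrib]
  refine Finset.sum_congr rfl fun j _ => ?_
  simp only [Pi.sub_apply]
  ring

lemma Bf_smul_left (n : ℕ) (a : ℝ) (u w : Fin n → ℝ) : Bf n (a • u) w = a * Bf n u w := by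
  unfold Bf
  rw [Finset.mul_sum]
  refine Finset.sum_congr rfl fun i _ => ?_
  rw [Finset.mul_sum]
  refine Finset.sum_congr rfl fun j _ => ?_
  simp only [Pi.smul_apply, smul_eq_mul]
  ring


lemma Bf_nonneg (n : ℕ) (u : Fin n → ℝ) : 0 ≤ Bf n u u := by
  rw [Bf_integral]
  apply intervalIntegral.integral_nonneg zero_le_one
  intro x _
  positivity

lemma Bf_pos (n : ℕ) (u : Fin n → ℝ) (hu : u ≠ 0) : 0 < Bf n u u := by
  rw [Bf_integral]
  set p : Polynomial ℝ := ∑ i : Fin n, C (u i) * X^(i:ℕ) with hp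
  have hpe : ∀ x : ℝ, p.eval x = ∑ i : Fin n, u i * x^(i:ℕ) := by
    intro x
    rw [hp, eval_finset_sum]
    exact Finset.sum_congr rfl fun i _ => by simp
  have hpne : p ≠ 0 := by
    obtain ⟨i₀, hi₀⟩ := Function.ne_iff.mp hu
    have hco : p.coeff (i₀:ℕ) = u i₀ := by
      rw [hp, Polynomial.finset_sum_coeff]
      rw [Finset.sum_eq_single i₀ (fun j _ hj => by
        rw [Polynomial.coeff_C_mul, Polynomial.coeff_X_pow,
          if_neg (fun h => hj (Fin.ext h).symm), mul_zero]) (by simp)]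
      simp
    intro h
    rw [h, Polynomial.coeff_zero] at hco
    exact hi₀ (by simpa using hco.symm)
  have hroots := Polynomial.finite_setOf_isRoot hpne
  have hIcc : (Set.Icc (0:ℝ) 1).Infinite := Set.Icc_infinite (by norm_num)
  obtain ⟨c, hc⟩ := (hIcc.diff hroots).nonempty
  apply intervalIntegral.integral_pos zero_lt_one
  · exact (Continuous.pow (by continuity) 2).continuousOn
  · intro x _; positivity
  · refine ⟨c, hc.1, ?_⟩
    have hcr : ∑ i : Fin n, u i * c^(i:ℕ) ≠ 0 := by
      rw [← hpe]
      exact fun h => hc.2 h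
    exact lt_of_le_of_ne (sq_nonneg _) (Ne.symm (pow_ne_zero _ hcr))

end Aux13

open Finset Polynomial Nat in
/-- If `ξ₀` is the unique real number with `det M₁(ξ₀) = 0`, then `M₂(z)` (with `(1,1)`
entry `z` and other entries `1/(i+j−1)`) is positive definite for every
`z > (1 + 1/n)ξ₀ + 1/2 − 1/(2n)`. -/
theorem stmt13 (n : ℕ) (hn : 2 ≤ n)
    (M₁ M₂ : ℝ → Matrix (Fin n) (Fin n) ℝ)
    (hM₁ : ∀ ξ, M₁ ξ = Matrix.of fun i j : Fin n =>
      if i.val = 0 ∧ j.val = 0 then ξ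
      else (1 : ℝ) / (((i.val + j.val + 1 : ℕ) : ℝ) * ((i.val + j.val + 2 : ℕ) : ℝ)))
    (hM₂ : ∀ z, M₂ z = Matrix.of fun i j : Fin n =>
      if i.val = 0 ∧ j.val = 0 then z
      else (1 : ℝ) / ((i.val + j.val + 1 : ℕ) : ℝ))
    (ξ₀ : ℝ) (hroot : (M₁ ξ₀).det = 0)
    (huniq : ∀ ξ : ℝ, (M₁ ξ).det = 0 → ξ = ξ₀) :
    ∀ z : ℝ, (1 + 1 / (n : ℝ)) * ξ₀ + 1 / 2 - 1 / (2 * (n : ℝ)) < z →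
      (M₂ z).PosDef := by
  have hn0 : (n:ℝ) ≠ 0 := by positivity
  have hn1 : (n:ℝ) + 1 ≠ 0 := by positivity
  have hnn : ((n:ℝ) * ((n:ℝ)+1)) ≠ 0 := by positivity
  set ξ' : ℝ := 1/2 - 1/((n:ℝ)*((n:ℝ)+1)) with hξ'
  have i0 : Fin n := ⟨0, by omega⟩
  -- the null vector
  set wv : Fin n → ℝ := fun i => wvec n i.val with hwv
  have hw0 : wv ⟨0, by omega⟩ = (n:ℝ)*((n:ℝ)+1)/2 := by
    rw [hwv]; exact wvec_zero n (by omega)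
  have hwne : wv ≠ 0 := by
    intro h
    have := congrFun h ⟨0, by omega⟩
    rw [hw0] at this
    simp only [Pi.zero_apply] at this
    have : (n:ℝ)*((n:ℝ)+1) = 0 := by linarith
    exact hnn this
  have hnull : (M₁ ξ') *ᵥ wv = 0 := by
    funext r
    rw [hM₁]
    show ∑ j : Fin n, (Matrix.of _ : Matrix (Fin n) (Fin n) ℝ) r j * wv j = 0
    simp only [Matrix.of_apply]
    have hsplit : ∀ j : Fin n,
        (if r.val = 0 ∧ j.val = 0 then ξ'
          else (1 : ℝ) / (((r.val + j.val + 1 : ℕ) : ℝ) * ((r.val + j.val + 2 : ℕ) : ℝ))) * wv j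
        = (1 : ℝ) / (((r.val:ℝ) + j.val + 1) * ((r.val:ℝ) + j.val + 2)) * wv j
          + (if r.val = 0 ∧ j.val = 0 then (ξ' - 1/2) * wv j else 0) := by
      intro j
      by_cases h : r.val = 0 ∧ j.val = 0
      · rw [if_pos h, if_pos h, h.1, h.2]
        norm_num
        ring
      · rw [if_neg h, if_neg h, add_zero]
        push_cast
        ring_nf
    rw [Finset.sum_congr rfl (fun j _ => hsplit j), Finset.sum_add_distrib]
    have hfirst : ∑ j : Fin n,
        (1 : ℝ) / (((r.val:ℝ) + j.val + 1) * ((r.val:ℝ) + j.val + 2)) * wv j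
        = if r.val = 0 then 1/2 else 0 := by
      rw [← rowB n hn r.val r.isLt]
      rw [← Fin.sum_univ_eq_sum_range (fun jv =>
        wvec n jv / ((((r.val:ℝ) + jv + 1)) * ((r.val:ℝ) + jv + 2))) n]
      exact Finset.sum_congr rfl fun j _ => by rw [hwv]; ring
    have hsecond : ∑ j : Fin n, (if r.val = 0 ∧ j.val = 0 then (ξ' - 1/2) * wv j else 0)
        = if r.val = 0 then (ξ' - 1/2) * ((n:ℝ)*((n:ℝ)+1)/2) else 0 := by
      rw [Finset.sum_eq_single (⟨0, by omega⟩ : Fin n)]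
      · by_cases h : r.val = 0
        · rw [if_pos ⟨h, rfl⟩, if_pos h, hw0]
        · rw [if_neg (fun hc => h hc.1), if_neg h]
      · intro j _ hj
        rw [if_neg (fun hc => hj (Fin.ext hc.2))]
      · intro h
        exact absurd (Finset.mem_univ _) h
    rw [hfirst, hsecond]
    by_cases h : r.val = 0
    · rw [if_pos h, if_pos h, hξ']
      show _ = (0:ℝ)
      field_simp
      ring
    · rw [if_neg h, if_neg h]
      show _ = (0:ℝ)
      norm_num
  have hdet : (M₁ ξ').det = 0 := Matrix.exists_mulVec_eq_zero_iff.mp ⟨wv, hwne, hnull⟩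
  have hξ₀ : ξ₀ = ξ' := (huniq ξ' hdet).symm
  -- threshold
  have hthr : (1 + 1 / (n : ℝ)) * ξ₀ + 1 / 2 - 1 / (2 * (n : ℝ)) = 1 - 1/(n:ℝ)^2 := by
    rw [hξ₀, hξ']
    field_simp
    ring
  intro z hz
  rw [hthr] at hz
  rw [Matrix.posDef_iff_dotProduct_mulVec]
  constructor
  · -- Hermitian
    rw [hM₂]
    ext i j
    simp only [Matrix.conjTranspose_apply, Matrix.of_apply, star_trivial]
    by_cases h1 : i.val = 0 ∧ j.val = 0
    · rw [if_pos h1, if_pos ⟨h1.2, h1.1⟩]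
    · rw [if_neg h1, if_neg (fun hc => h1 ⟨hc.2, hc.1⟩), Nat.add_comm j.val i.val]
  · intro x hx
    have hstar : star x = x := funext fun i => star_trivial _
    rw [hstar, hM₂]
    -- quadratic form
    set kv : Fin n → ℝ := fun i => kvec n i.val with hkv
    have hBk : ∀ y : Fin n → ℝ, Bf n y kv = y ⟨0, by omega⟩ := by
      intro y
      rw [Bf_def]
      have hinner : ∀ i : Fin n, ∑ j : Fin n, y i * kv j / (((i:ℕ):ℝ) + ((j:ℕ):ℝ) + 1)
          = y i * (if i.val = 0 then 1 else 0) := by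
        intro i
        rw [← rowA n hn i.val i.isLt,
          ← Fin.sum_univ_eq_sum_range (fun jv => kvec n jv / ((i.val:ℝ) + jv + 1)) n,
          Finset.mul_sum]
        exact Finset.sum_congr rfl fun j _ => by rw [hkv]; ring
      rw [Finset.sum_congr rfl (fun i _ => hinner i)]
      rw [Finset.sum_eq_single (⟨0, by omega⟩ : Fin n)]
      · rw [if_pos rfl, mul_one]
      · intro j _ hj
        rw [if_neg (fun hc => hj (Fin.ext hc)), mul_zero]
      · intro h
        exact absurd (Finset.mem_univ _) h
    have hkk : Bf n kv kv = (n:ℝ)^2 := by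
      rw [hBk kv, hkv]
      exact kvec_zero n (by omega)
    set x0 : ℝ := x ⟨0, by omega⟩ with hx0
    set α : ℝ := x0 / (n:ℝ)^2 with hα
    set u : Fin n → ℝ := x - α • kv with hu
    have hBxk : Bf n x kv = x0 := hBk x
    have hBux : Bf n u x = Bf n x x - α * x0 := by
      rw [hu, Bf_sub_left, Bf_smul_left, Bf_symm n kv x, hBxk]
    have hBuk : Bf n u kv = Bf n x kv - α * Bf n kv kv := by
      rw [hu, Bf_sub_left, Bf_smul_left]
    have hBuu : Bf n u u = Bf n x x - 2*α*x0 + α^2 * (n:ℝ)^2 := by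
      rw [show Bf n u u = Bf n x u - α * Bf n kv u from by
        rw [hu, Bf_sub_left, Bf_smul_left]]
      rw [Bf_symm n x u, Bf_symm n kv u, hBux, hBuk, hBxk, hkk]
      ring
    -- quadratic form = Bf x x + (z-1) x0²
    have hQ : x ⬝ᵥ ((Matrix.of fun i j : Fin n =>
        if i.val = 0 ∧ j.val = 0 then z
        else (1 : ℝ) / ((i.val + j.val + 1 : ℕ) : ℝ)) *ᵥ x)
        = Bf n x x + (z - 1) * x0^2 := by
      show ∑ i : Fin n, x i * ∑ j : Fin n, (Matrix.of _ : Matrix (Fin n) (Fin n) ℝ) i j * x j = _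
      simp only [Matrix.of_apply]
      have hsplit : ∀ i j : Fin n,
          x i * ((if i.val = 0 ∧ j.val = 0 then z
            else (1 : ℝ) / ((i.val + j.val + 1 : ℕ) : ℝ)) * x j)
          = x i * x j / (((i:ℕ):ℝ) + ((j:ℕ):ℝ) + 1)
            + (if i.val = 0 ∧ j.val = 0 then (z - 1) * (x i * x j) else 0) := by
        intro i j
        by_cases h : i.val = 0 ∧ j.val = 0
        · rw [if_pos h, if_pos h, h.1, h.2]
          norm_num
          ring
        · rw [if_neg h, if_neg h, add_zero]
          push_cast
          ring
      rw [Finset.sum_congr rfl (fun i _ => by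
        rw [Finset.mul_sum, Finset.sum_congr rfl (fun j _ => hsplit i j),
          Finset.sum_add_distrib])]
      rw [Finset.sum_add_distrib, Bf_def]
      congr 1
      -- the correction term
      have houter : ∀ i : Fin n,
          ∑ j : Fin n, (if i.val = 0 ∧ j.val = 0 then (z - 1) * (x i * x j) else 0)
          = if i.val = 0 then (z-1) * (x i * x0) else 0 := by
        intro i
        rw [Finset.sum_eq_single (⟨0, by omega⟩ : Fin n)]
        · by_cases h : i.val = 0
          · rw [if_pos ⟨h, rfl⟩, if_pos h, hx0]
          · rw [if_neg (fun hc => h hc.1), if_neg h]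
        · intro j _ hj
          rw [if_neg (fun hc => hj (Fin.ext hc.2))]
        · intro h; exact absurd (Finset.mem_univ _) h
      rw [Finset.sum_congr rfl (fun i _ => houter i)]
      rw [Finset.sum_eq_single (⟨0, by omega⟩ : Fin n)]
      · rw [if_pos rfl, hx0]; ring
      · intro j _ hj
        rw [if_neg (fun hc => hj (Fin.ext hc))]
      · intro h; exact absurd (Finset.mem_univ _) h
    rw [hQ]
    have hdecomp : Bf n x x = Bf n u u + x0^2/(n:ℝ)^2 := by
      rw [hBuu, hα]
      field_simp
      ring
    rw [hdecomp]
    by_cases hx0z : x0 = 0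
    · have hux : u = x := by
        rw [hu, hα, hx0z, zero_div, zero_smul, sub_zero]
      rw [hux, hx0z]
      norm_num
      exact Bf_pos n x hx
    · have h1 : 0 < (z - 1 + 1/(n:ℝ)^2) * x0^2 := by
        apply mul_pos
        · have : 1 - 1/(n:ℝ)^2 < z := hz
          have hp : (0:ℝ) < 1/(n:ℝ)^2 := by positivity
          linarith
        · positivity
      have h2 := Bf_nonneg n u
      have : x0^2/(n:ℝ)^2 + (z-1)*x0^2 = (z - 1 + 1/(n:ℝ)^2) * x0^2 := by
        field_simp
        ring
      linarith [h1, h2, this]
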